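/- arXiv:2105.11839 — 5 statements merged into one kernel-verified Lean document; each statement's English description precedes it below -/
import Mathlib

section
/- Let Γ be a finite type of candidate graphs, let pZ : ℝⁿ → ℝ be a measurable prior density (pZ ≥ 0, integrable with ∫ pZ = 1), let q : ℝⁿ → Γ → ℝ be measurable in z with q z G ≥ 0 and ∑_{G} q z G = 1 for every z, let L : Γ → ℝ satisfy L G > 0 for all G, and let f : Γ → ℝ. Define the graph marginal pΓ G := ∫ pZ z · q z G dz and assume ∑_G pΓ G · L G > 0. Then the posterior expectation of f over graphs equals the posterior expectation over z of the conditional ratio: (∑_G pΓ G · L G · f G) / (∑_G pΓ G · L G) = (∫ pZ z · m z · r z dz) / (∫ pZ z · m z dz), where m z := ∑_G q z G · L G and r z := (∑_G q z G · L G · f G) / m z. (Note m z > 0 for every z since L > 0 and ∑_G q z G = 1.) -/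
open MeasureTheory

/-- Proposition 1(a) of DiBS: the posterior expectation of `f` over graphs equals the
posterior expectation over the latent variable `z` of the conditional ratio. -/
theorem dibs_latent_posterior_expectation_marginal
    {n : ℕ} {Γ : Type} [Fintype Γ]
    (pZ : EuclideanSpace ℝ (Fin n) → ℝ)
    (hpZ_meas : Measurable pZ)
    (hpZ_nonneg : ∀ z, 0 ≤ pZ z)
    (hpZ_int : Integrable pZ)
    (hpZ_one : ∫ z, pZ z = 1)
    (q : EuclideanSpace ℝ (Fin n) → Γ → ℝ)
    (hq_meas : ∀ G, Measurable fun z => q z G)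
    (hq_nonneg : ∀ z G, 0 ≤ q z G)
    (hq_sum : ∀ z, ∑ G, q z G = 1)
    (L : Γ → ℝ) (hL : ∀ G, 0 < L G)
    (f : Γ → ℝ)
    (pΓ : Γ → ℝ) (hpΓ : ∀ G, pΓ G = ∫ z, pZ z * q z G)
    (m : EuclideanSpace ℝ (Fin n) → ℝ)
    (hm : ∀ z, m z = ∑ G, q z G * L G)
    (r : EuclideanSpace ℝ (Fin n) → ℝ)
    (hr : ∀ z, r z = (∑ G, q z G * L G * f G) / m z)
    (hpos : 0 < ∑ G, pΓ G * L G) :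
    (∑ G, pΓ G * L G * f G) / (∑ G, pΓ G * L G)
      = (∫ z, pZ z * m z * r z) / (∫ z, pZ z * m z) := by
  -- q z G ≤ 1
  have hq_le_one : ∀ z G, q z G ≤ 1 := by
    intro z G
    calc q z G ≤ ∑ G', q z G' :=
      Finset.single_le_sum (fun G' _ => hq_nonneg z G') (Finset.mem_univ G)
    _ = 1 := hq_sum z
  -- integrability of pZ * q · G
  have hint : ∀ G, Integrable (fun z => pZ z * q z G) := by
    intro G
    refine hpZ_int.mono ((hpZ_meas.mul (hq_meas G)).aestronglyMeasurable) ?_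
    filter_upwards with z
    rw [Real.norm_eq_abs, Real.norm_eq_abs, abs_of_nonneg (hpZ_nonneg z),
      abs_of_nonneg (mul_nonneg (hpZ_nonneg z) (hq_nonneg z G))]
    calc pZ z * q z G ≤ pZ z * 1 :=
      mul_le_mul_of_nonneg_left (hq_le_one z G) (hpZ_nonneg z)
    _ = pZ z := mul_one _
  -- m z > 0
  have hmpos : ∀ z, 0 < m z := by
    intro z
    rw [hm]
    have : ∃ G ∈ Finset.univ, 0 < q z G * L G := by
      by_contra h
      push_neg at h
      have : ∀ G, q z G = 0 := by
        intro G
        have h1 := h G (Finset.mem_univ G)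
        have := hq_nonneg z G
        nlinarith [hL G]
      have hsum := hq_sum z
      rw [Finset.sum_eq_zero (fun G _ => this G)] at hsum
      linarith
    obtain ⟨G, _, hG⟩ := this
    exact Finset.sum_pos' (fun G' _ => mul_nonneg (hq_nonneg z G') (hL G').le)
      ⟨G, Finset.mem_univ G, hG⟩
  -- pointwise identities
  have hmz : ∀ z, pZ z * m z = ∑ G, pZ z * q z G * L G := by
    intro z
    rw [hm, Finset.mul_sum]
    congr 1; ext G; ring
  have hmrz : ∀ z, pZ z * m z * r z = ∑ G, pZ z * q z G * (L G * f G) := by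
    intro z
    rw [hr, mul_assoc, mul_div_cancel₀ _ (hmpos z).ne', Finset.mul_sum]
    congr 1; ext G; ring
  -- the two integral identities
  have h1 : ∫ z, pZ z * m z = ∑ G, pΓ G * L G := by
    simp_rw [hmz]
    rw [integral_finset_sum _ (fun G _ => (hint G).mul_const (L G))]
    congr 1; ext G
    rw [integral_mul_const, hpΓ]
  have h2 : ∫ z, pZ z * m z * r z = ∑ G, pΓ G * L G * f G := by
    simp_rw [hmrz]
    rw [integral_finset_sum _ (fun G _ => (hint G).mul_const (L G * f G))]
    congr 1; ext G
    rw [integral_mul_const, hpΓ, mul_assoc]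
  rw [h1, h2]
end

section
/- Let Γ be a finite type of candidate graphs, let pZ : ℝⁿ → ℝ be a measurable prior density (pZ ≥ 0, integrable with ∫ pZ = 1), let q : ℝⁿ → Γ → ℝ be measurable in z with q z G ≥ 0 and ∑_G q z G = 1 for every z, let π : Γ → ℝᵐ → ℝ be a measurable parameter prior with π G θ > 0 and ∫ π G θ dθ = 1 for each G, let ℓ : Γ → ℝᵐ → ℝ be a measurable likelihood with ℓ G θ > 0, and let f : Γ → ℝᵐ → ℝ be bounded measurable. Set g G θ := π G θ · ℓ G θ, pΓ G := ∫ pZ z · q z G dz, and assume ∫ pZ z · g G θ · q z G d(z,θ) is finite for each G and that ∑_G ∫ pΓ G · g G θ dθ > 0. Then (∑_G ∫ pΓ G · g G θ · f G θ dθ) / (∑_G ∫ pΓ G · g G θ dθ) = (∬ pZ z · M z θ · R z θ dθ dz) / (∬ pZ z · M z θ dθ dz), where M z θ := ∑_G q z G · g G θ and R z θ := (∑_G q z G · g G θ · f G θ) / M z θ. -/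
open MeasureTheory

/-- Proposition 1(b) of DiBS: the joint posterior expectation of `f` over graphs and
parameters equals the posterior expectation over the latent variables `(z, θ)` of the
conditional ratio. -/
theorem dibs_latent_posterior_expectation_joint
    {n m : ℕ} {Γ : Type} [Fintype Γ]
    (pZ : EuclideanSpace ℝ (Fin n) → ℝ)
    (hpZ_meas : Measurable pZ)
    (hpZ_nonneg : ∀ z, 0 ≤ pZ z)
    (hpZ_int : Integrable pZ)
    (hpZ_one : ∫ z, pZ z = 1)
    (q : EuclideanSpace ℝ (Fin n) → Γ → ℝ)
    (hq_meas : ∀ G, Measurable fun z => q z G)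
    (hq_nonneg : ∀ z G, 0 ≤ q z G)
    (hq_sum : ∀ z, ∑ G, q z G = 1)
    (prior : Γ → EuclideanSpace ℝ (Fin m) → ℝ)
    (hprior_meas : ∀ G, Measurable (prior G))
    (hprior_pos : ∀ G θ, 0 < prior G θ)
    (hprior_one : ∀ G, ∫ θ, prior G θ = 1)
    (lik : Γ → EuclideanSpace ℝ (Fin m) → ℝ)
    (hlik_meas : ∀ G, Measurable (lik G))
    (hlik_pos : ∀ G θ, 0 < lik G θ)
    (f : Γ → EuclideanSpace ℝ (Fin m) → ℝ)
    (hf_meas : ∀ G, Measurable (f G))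
    (hf_bdd : ∃ C, ∀ G θ, |f G θ| ≤ C)
    (g : Γ → EuclideanSpace ℝ (Fin m) → ℝ)
    (hg : ∀ G θ, g G θ = prior G θ * lik G θ)
    (pΓ : Γ → ℝ) (hpΓ : ∀ G, pΓ G = ∫ z, pZ z * q z G)
    (hint : ∀ G, Integrable
      (fun p : EuclideanSpace ℝ (Fin n) × EuclideanSpace ℝ (Fin m) =>
        pZ p.1 * g G p.2 * q p.1 G))
    (M : EuclideanSpace ℝ (Fin n) → EuclideanSpace ℝ (Fin m) → ℝ)
    (hM : ∀ z θ, M z θ = ∑ G, q z G * g G θ)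
    (R : EuclideanSpace ℝ (Fin n) → EuclideanSpace ℝ (Fin m) → ℝ)
    (hR : ∀ z θ, R z θ = (∑ G, q z G * g G θ * f G θ) / M z θ)
    (hpos : 0 < ∑ G, ∫ θ, pΓ G * g G θ) :
    (∑ G, ∫ θ, pΓ G * g G θ * f G θ) / (∑ G, ∫ θ, pΓ G * g G θ)
      = (∫ z, ∫ θ, pZ z * M z θ * R z θ) / (∫ z, ∫ θ, pZ z * M z θ) := by
  classical
  have hg_pos : ∀ G θ, 0 < g G θ := fun G θ => by
    rw [hg]; exact mul_pos (hprior_pos G θ) (hlik_pos G θ)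
  have hM_pos : ∀ z θ, 0 < M z θ := by
    intro z θ
    rw [hM]
    obtain ⟨G, hG⟩ : ∃ G, 0 < q z G := by
      by_contra h
      push_neg at h
      have h0 : ∑ G, q z G = 0 :=
        Finset.sum_eq_zero fun G _ => le_antisymm (h G) (hq_nonneg z G)
      rw [hq_sum z] at h0
      exact one_ne_zero h0
    exact Finset.sum_pos'
      (fun i _ => mul_nonneg (hq_nonneg z i) (hg_pos i θ).le)
      ⟨G, Finset.mem_univ G, mul_pos hG (hg_pos G θ)⟩
  -- integrability with f inserted
  have hintf : ∀ G, Integrable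
      (fun p : EuclideanSpace ℝ (Fin n) × EuclideanSpace ℝ (Fin m) =>
        pZ p.1 * g G p.2 * q p.1 G * f G p.2) := by
    intro G
    obtain ⟨C, hC⟩ := hf_bdd
    have h1 : Integrable
        (fun p : EuclideanSpace ℝ (Fin n) × EuclideanSpace ℝ (Fin m) =>
          f G p.2 * (pZ p.1 * g G p.2 * q p.1 G)) :=
      (hint G).bdd_mul ((hf_meas G).comp measurable_snd).aestronglyMeasurable
        (c := C) (Filter.Eventually.of_forall fun p => by simpa [Real.norm_eq_abs] using hC G p.2)
    exact h1.congr (Filter.Eventually.of_forall fun p => by ring)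
  -- key identity, for a general bounded integrand φ
  have key : ∀ (φ : Γ → EuclideanSpace ℝ (Fin m) → ℝ),
      (∀ G, Integrable
        (fun p : EuclideanSpace ℝ (Fin n) × EuclideanSpace ℝ (Fin m) =>
          pZ p.1 * g G p.2 * q p.1 G * φ G p.2)) →
      (∑ G, ∫ θ, pΓ G * g G θ * φ G θ)
        = ∫ z, ∫ θ, pZ z * ∑ G, q z G * g G θ * φ G θ := by
    intro φ hφ
    have step1 : ∀ G, (∫ θ, pΓ G * g G θ * φ G θ)
        = ∫ z, ∫ θ, pZ z * g G θ * q z G * φ G θ := by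
      intro G
      have hswap := integral_integral_swap (f := fun z θ => pZ z * g G θ * q z G * φ G θ)
        (hφ G)
      rw [hswap]
      refine integral_congr_ae (Filter.Eventually.of_forall fun θ => ?_)
      dsimp only
      rw [hpΓ]
      have : (fun z => pZ z * g G θ * q z G * φ G θ)
          = fun z => (g G θ * φ G θ) * (pZ z * q z G) := funext fun z => by ring
      rw [this, integral_const_mul]
      ring
    calc (∑ G, ∫ θ, pΓ G * g G θ * φ G θ)
        = ∑ G, ∫ z, ∫ θ, pZ z * g G θ * q z G * φ G θ :=
          Finset.sum_congr rfl fun G _ => step1 G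
      _ = ∫ z, ∑ G, ∫ θ, pZ z * g G θ * q z G * φ G θ := by
          rw [integral_finset_sum _ (fun G _ => (hφ G).integral_prod_left)]
      _ = ∫ z, ∫ θ, pZ z * ∑ G, q z G * g G θ * φ G θ := by
          refine integral_congr_ae ?_
          have hae : ∀ᵐ z, ∀ G,
              Integrable (fun θ => pZ z * g G θ * q z G * φ G θ) :=
            ae_all_iff.2 fun G => (hφ G).prod_right_ae
          filter_upwards [hae] with z hz
          rw [← integral_finset_sum _ (fun G _ => hz G)]
          refine integral_congr_ae (Filter.Eventually.of_forall fun θ => ?_)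
          dsimp only
          rw [Finset.mul_sum]
          exact Finset.sum_congr rfl fun G _ => by ring
  -- denominator
  have hden : (∑ G, ∫ θ, pΓ G * g G θ) = ∫ z, ∫ θ, pZ z * M z θ := by
    have h1 : ∀ G, Integrable
        (fun p : EuclideanSpace ℝ (Fin n) × EuclideanSpace ℝ (Fin m) =>
          pZ p.1 * g G p.2 * q p.1 G * (1 : ℝ)) := by
      intro G
      exact (hint G).congr (Filter.Eventually.of_forall fun p => by ring)
    have := key (fun _ _ => (1 : ℝ)) h1
    simp only [mul_one] at this
    rw [this]
    refine integral_congr_ae (Filter.Eventually.of_forall fun z => ?_)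
    refine integral_congr_ae (Filter.Eventually.of_forall fun θ => ?_)
    dsimp only
    rw [hM]
  -- numerator
  have hnum : (∑ G, ∫ θ, pΓ G * g G θ * f G θ) = ∫ z, ∫ θ, pZ z * M z θ * R z θ := by
    rw [key f hintf]
    refine integral_congr_ae (Filter.Eventually.of_forall fun z => ?_)
    refine integral_congr_ae (Filter.Eventually.of_forall fun θ => ?_)
    dsimp only
    have hMne : M z θ ≠ 0 := (hM_pos z θ).ne'
    have hMR : M z θ * R z θ = ∑ G, q z G * g G θ * f G θ := by
      rw [hR, mul_div_cancel₀ _ hMne]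
    rw [mul_assoc, hMR]
  rw [hnum, hden]
end

section
/- Fix d, k ∈ ℕ and Z = (U, V) with U, V : Fin d → EuclideanSpace ℝ (Fin k) such that ⟪u_i, v_j⟫ ≠ 0 for all i ≠ j. Then for every zero-diagonal binary matrix G : Fin d → Fin d → {0,1}, the probability p_α(G | Z) converges as α → ∞ to 1 if G = G_∞(Z) and to 0 otherwise; that is, lim_{α→∞} p_α(G | Z) = 𝟙[G = G_∞(Z)]. -/
open Filter

/-- Sigmoid with inverse temperature `α`: `σ_α(x) = 1 / (1 + exp (−α x))`. -/
noncomputable def sigmoidAlpha (α x : ℝ) : ℝ := (1 + Real.exp (-(α * x)))⁻¹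

/-- The DiBS latent graph model: the probability of the zero-diagonal binary adjacency
matrix `G` given latent node embeddings `U, V`, at inverse temperature `α`:
`p_α(G | Z) = ∏_{i ≠ j} σ_α(⟪u_i, v_j⟫)^{G i j} (1 − σ_α(⟪u_i, v_j⟫))^{1 − G i j}`. -/
noncomputable def pAlpha {d k : ℕ} (α : ℝ) (U V : Fin d → EuclideanSpace ℝ (Fin k))
    (G : Fin d → Fin d → Bool) : ℝ :=
  ∏ i, ∏ j,
    if i = j then 1
    else
      sigmoidAlpha α (inner ℝ (U i) (V j)) ^ (G i j).toNat *
        (1 - sigmoidAlpha α (inner ℝ (U i) (V j))) ^ (1 - (G i j).toNat)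

/-- The limiting graph `G_∞(Z)`: edge `(i, j)` present iff `i ≠ j` and `⟪u_i, v_j⟫ > 0`. -/
noncomputable def gInfty {d k : ℕ} (U V : Fin d → EuclideanSpace ℝ (Fin k)) :
    Fin d → Fin d → Bool :=
  fun i j => decide (i ≠ j ∧ 0 < (inner ℝ (U i) (V j) : ℝ))

lemma sigmoid_tendsto_one {x : ℝ} (hx : 0 < x) :
    Tendsto (fun α : ℝ => sigmoidAlpha α x) atTop (nhds 1) := by
  have h1 : Tendsto (fun α : ℝ => -(α * x)) atTop atBot := by
    apply Filter.tendsto_neg_atBot_iff.mpr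
    exact Tendsto.atTop_mul_const hx tendsto_id
  have h2 : Tendsto (fun α : ℝ => 1 + Real.exp (-(α * x))) atTop (nhds (1 + 0)) :=
    tendsto_const_nhds.add (Real.tendsto_exp_atBot.comp h1)
  have := h2.inv₀ (by norm_num)
  simpa [sigmoidAlpha] using this

lemma sigmoid_tendsto_zero {x : ℝ} (hx : x < 0) :
    Tendsto (fun α : ℝ => sigmoidAlpha α x) atTop (nhds 0) := by
  have h1 : Tendsto (fun α : ℝ => -(α * x)) atTop atTop := by
    have : Tendsto (fun α : ℝ => α * (-x)) atTop atTop :=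
      Tendsto.atTop_mul_const (by linarith) tendsto_id
    simpa [mul_neg, neg_mul] using this
  have h2 : Tendsto (fun α : ℝ => 1 + Real.exp (-(α * x))) atTop atTop :=
    tendsto_atTop_add_const_left _ 1 (Real.tendsto_exp_atTop.comp h1)
  exact h2.inv_tendsto_atTop

/-- Equation (A.26) of DiBS: as `α → ∞`, `p_α(G | Z)` converges to `𝟙[G = G_∞(Z)]`,
provided no inner product `⟪u_i, v_j⟫` (for `i ≠ j`) vanishes. -/
theorem pAlpha_tendsto_indicator {d k : ℕ}
    (U V : Fin d → EuclideanSpace ℝ (Fin k))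
    (hne : ∀ i j : Fin d, i ≠ j → (inner ℝ (U i) (V j) : ℝ) ≠ 0)
    (G : Fin d → Fin d → Bool) (hG : ∀ i, G i i = false) :
    Tendsto (fun α : ℝ => pAlpha α U V G) atTop
      (nhds (if G = gInfty U V then (1 : ℝ) else 0)) := by
  set L : Fin d → Fin d → ℝ := fun i j =>
    if i = j then 1 else if G i j = gInfty U V i j then 1 else 0 with hL
  have hfac : ∀ i j : Fin d,
      Tendsto (fun α : ℝ =>
        if i = j then (1 : ℝ)
        else sigmoidAlpha α (inner ℝ (U i) (V j)) ^ (G i j).toNat *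
          (1 - sigmoidAlpha α (inner ℝ (U i) (V j))) ^ (1 - (G i j).toNat))
        atTop (nhds (L i j)) := by
    intro i j
    by_cases hij : i = j
    · simp [hij, hL]
    · simp only [hij, if_false, hL]
      have hx := hne i j hij
      rcases lt_or_gt_of_ne hx with hneg | hpos
      · -- inner < 0 : gInfty = false
        have hg : gInfty U V i j = false := by
          simp only [gInfty, decide_eq_false_iff_not]
          rintro ⟨-, h⟩; exact absurd h (not_lt.mpr hneg.le)
        rw [hg]
        cases hb : G i j
        · -- G = false, matches; limit 1 : (1-σ)^1 → 1
          have := ((tendsto_const_nhds (x := (1:ℝ))).sub (sigmoid_tendsto_zero hneg))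
          simpa using this
        · -- G = true, mismatch; limit 0 : σ → 0
          have := sigmoid_tendsto_zero hneg
          simpa using this
      · have hg : gInfty U V i j = true := by
          simp only [gInfty, decide_eq_true_eq]
          refine ⟨hij, ?_⟩; simpa [PiLp.inner_apply] using hpos
        rw [hg]
        cases hb : G i j
        · have := ((tendsto_const_nhds (x := (1:ℝ))).sub (sigmoid_tendsto_one hpos))
          simpa using this
        · have := sigmoid_tendsto_one hpos
          simpa using this
  have hprod : Tendsto (fun α : ℝ => pAlpha α U V G) atTop
      (nhds (∏ i, ∏ j, L i j)) := by
    unfold pAlpha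
    exact tendsto_finset_prod _ fun i _ => tendsto_finset_prod _ fun j _ => hfac i j
  have hval : (∏ i, ∏ j, L i j) = if G = gInfty U V then (1 : ℝ) else 0 := by
    by_cases hGe : G = gInfty U V
    · simp only [hGe, if_true]
      apply Finset.prod_eq_one
      intro i _
      apply Finset.prod_eq_one
      intro j _
      simp [hL, hGe]
    · simp only [hGe, if_false]
      have : ∃ i j, G i j ≠ gInfty U V i j := by
        by_contra h
        push_neg at h
        exact hGe (funext fun i => funext fun j => h i j)
      obtain ⟨i, j, hij⟩ := this
      have hij' : i ≠ j := by
        rintro rfl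
        apply hij
        simp [hG i, gInfty]
      apply Finset.prod_eq_zero (Finset.mem_univ i)
      apply Finset.prod_eq_zero (Finset.mem_univ j)
      simp [hL, hij', hij]
  rwa [hval] at hprod
end

section
/- Fix d, k ∈ ℕ and Z = (U, V) with U, V : Fin d → EuclideanSpace ℝ (Fin k) such that ⟪u_i, v_j⟫ ≠ 0 for all i ≠ j. Then for every function f from zero-diagonal binary d × d matrices to ℝ, the expectation under the graph model converges to the value at the limiting graph: lim_{α→∞} ∑_G p_α(G | Z) · f(G) = f(G_∞(Z)), where the sum is over all zero-diagonal binary matrices G : Fin d → Fin d → {0,1}. -/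
open Filter

/-- Zero-diagonal binary `d × d` matrices. -/
def ZeroDiagGraph (d : ℕ) : Type := {G : Fin d → Fin d → Bool // ∀ i, G i i = false}

instance (d : ℕ) : Fintype (ZeroDiagGraph d) := Subtype.fintype _

/-- The limiting graph `G_∞(Z)` as a zero-diagonal binary matrix. -/
noncomputable def gInftyZ {d k : ℕ} (U V : Fin d → EuclideanSpace ℝ (Fin k)) :
    ZeroDiagGraph d :=
  ⟨fun i j => decide (i ≠ j ∧ 0 < (inner ℝ (U i) (V j) : ℝ)), fun i => by simp⟩

lemma sig_one {x : ℝ} (hx : 0 < x) :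
    Filter.Tendsto (fun α => sigmoidAlpha α x) atTop (nhds 1) := by
  have h1 : Tendsto (fun α : ℝ => α * x) atTop atTop :=
    Tendsto.atTop_mul_const hx tendsto_id
  have h2 : Tendsto (fun α : ℝ => Real.exp (-(α * x))) atTop (nhds 0) :=
    Real.tendsto_exp_atBot.comp (tendsto_neg_atBot_iff.mpr h1)
  have h3 : Tendsto (fun α : ℝ => (1 + Real.exp (-(α * x)))⁻¹) atTop (nhds ((1 + 0)⁻¹)) :=
    (tendsto_const_nhds.add h2).inv₀ (by norm_num)
  simpa [sigmoidAlpha] using h3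

lemma sig_zero {x : ℝ} (hx : x < 0) :
    Filter.Tendsto (fun α => sigmoidAlpha α x) atTop (nhds 0) := by
  have h1 : Tendsto (fun α : ℝ => -(α * x)) atTop atTop := by
    have := Tendsto.atTop_mul_const (neg_pos.mpr hx) (tendsto_id (α := ℝ) (x := atTop))
    simpa [mul_neg] using this
  have h2 : Tendsto (fun α : ℝ => Real.exp (-(α * x))) atTop atTop :=
    Real.tendsto_exp_atTop.comp h1
  exact tendsto_inv_atTop_zero.comp (tendsto_atTop_add_const_left _ 1 h2)

open Classical in
lemma pAlpha_tendsto {d k : ℕ} (U V : Fin d → EuclideanSpace ℝ (Fin k))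
    (hne : ∀ i j : Fin d, i ≠ j → (inner ℝ (U i) (V j) : ℝ) ≠ 0)
    (G : ZeroDiagGraph d) :
    Filter.Tendsto (fun α => pAlpha α U V G.1) atTop
      (nhds (if G = gInftyZ U V then 1 else 0)) := by
  classical
  set L : Fin d → Fin d → ℝ := fun i j =>
    if i = j then 1
    else if G.1 i j = decide (0 < (inner ℝ (U i) (V j) : ℝ)) then 1 else 0 with hL
  have hone : Tendsto (fun _ : ℝ => (1:ℝ)) atTop (nhds 1) := tendsto_const_nhds
  have hfac : ∀ i j : Fin d,
      Tendsto (fun α : ℝ =>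
        if i = j then (1:ℝ)
        else sigmoidAlpha α (inner ℝ (U i) (V j)) ^ (G.1 i j).toNat *
          (1 - sigmoidAlpha α (inner ℝ (U i) (V j))) ^ (1 - (G.1 i j).toNat))
        atTop (nhds (L i j)) := by
    intro i j
    by_cases hij : i = j
    · have : L i j = 1 := by rw [hL]; simp only [if_pos hij]
      rw [this]
      simpa only [if_pos hij] using hone
    · have hx := hne i j hij
      simp only [if_neg hij]
      rcases lt_or_gt_of_ne hx with hneg | hpos
      · have hs := sig_zero hneg
        have hd : decide (0 < (inner ℝ (U i) (V j) : ℝ)) = false :=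
          decide_eq_false (not_lt.mpr hneg.le)
        cases hGij : G.1 i j
        · have hLij : L i j = 1 := by
            rw [hL]; simp only [if_neg hij]; rw [if_pos (by rw [hGij, hd])]
          rw [hLij]
          simp only [hGij, Bool.toNat_false, pow_zero, one_mul, Nat.sub_zero, pow_one]
          simpa using hone.sub hs
        · have hLij : L i j = 0 := by
            rw [hL]; simp only [if_neg hij]
            rw [if_neg (by rw [hGij, hd]; exact Bool.true_eq_false ▸ (by simp))]
          rw [hLij]
          simp only [hGij, Bool.toNat_true, pow_one, Nat.sub_self, pow_zero, mul_one]
          exact hs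
      · have hs := sig_one hpos
        have hd : decide (0 < (inner ℝ (U i) (V j) : ℝ)) = true := decide_eq_true hpos
        cases hGij : G.1 i j
        · have hLij : L i j = 0 := by
            rw [hL]; simp only [if_neg hij]
            rw [if_neg (by rw [hGij, hd]; simp)]
          rw [hLij]
          simp only [hGij, Bool.toNat_false, pow_zero, one_mul, Nat.sub_zero, pow_one]
          simpa using hone.sub hs
        · have hLij : L i j = 1 := by
            rw [hL]; simp only [if_neg hij]; rw [if_pos (by rw [hGij, hd])]
          rw [hLij]
          simp only [hGij, Bool.toNat_true, pow_one, Nat.sub_self, pow_zero, mul_one]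
          exact hs
  have hprod : Tendsto (fun α => pAlpha α U V G.1) atTop (nhds (∏ i, ∏ j, L i j)) := by
    unfold pAlpha
    exact tendsto_finset_prod _ fun i _ => tendsto_finset_prod _ fun j _ => hfac i j
  have hLval : (∏ i, ∏ j, L i j) = if G = gInftyZ U V then 1 else 0 := by
    by_cases hG : G = gInftyZ U V
    · rw [if_pos hG]
      apply Finset.prod_eq_one; intro i _
      apply Finset.prod_eq_one; intro j _
      by_cases hij : i = j
      · rw [hL]; simp only [if_pos hij]
      · have hgg : G.1 i j = decide (0 < (inner ℝ (U i) (V j) : ℝ)) := by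
          rw [hG]
          show decide (i ≠ j ∧ _) = _
          exact decide_eq_decide.mpr (and_iff_right hij)
        rw [hL]; simp only [if_neg hij]; rw [if_pos hgg]
    · rw [if_neg hG]
      have : ∃ i j, G.1 i j ≠ (gInftyZ U V).1 i j := by
        by_contra h
        push_neg at h
        exact hG (Subtype.ext (funext fun i => funext fun j => h i j))
      obtain ⟨i, j, hij2⟩ := this
      have hij : i ≠ j := by
        rintro rfl
        exact hij2 (by rw [G.2, (gInftyZ U V).2])
      apply Finset.prod_eq_zero (Finset.mem_univ i)
      apply Finset.prod_eq_zero (Finset.mem_univ j)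
      have hgi : (gInftyZ U V).1 i j = decide (0 < (inner ℝ (U i) (V j) : ℝ)) := by
        show decide (i ≠ j ∧ _) = _
        exact decide_eq_decide.mpr (and_iff_right hij)
      rw [hgi] at hij2
      rw [hL]; simp only [if_neg hij]; rw [if_neg hij2]
  rw [← hLval]
  exact hprod

/-- Equation (A.26), second line, of DiBS: as `α → ∞`, the expectation of `f` under the
graph model converges to `f(G_∞(Z))`, provided no inner product `⟪u_i, v_j⟫` (for
`i ≠ j`) vanishes. -/
theorem pAlpha_expectation_tendsto {d k : ℕ}
    (U V : Fin d → EuclideanSpace ℝ (Fin k))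
    (hne : ∀ i j : Fin d, i ≠ j → (inner ℝ (U i) (V j) : ℝ) ≠ 0)
    (f : ZeroDiagGraph d → ℝ) :
    Tendsto (fun α : ℝ => ∑ G : ZeroDiagGraph d, pAlpha α U V G.1 * f G) atTop
      (nhds (f (gInftyZ U V))) := by
  classical
  have h : Tendsto (fun α : ℝ => ∑ G : ZeroDiagGraph d, pAlpha α U V G.1 * f G) atTop
      (nhds (∑ G : ZeroDiagGraph d, (if G = gInftyZ U V then (1:ℝ) else 0) * f G)) :=
    tendsto_finset_sum _ fun G _ => (pAlpha_tendsto U V hne G).mul_const (f G)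
  have : (∑ G : ZeroDiagGraph d, (if G = gInftyZ U V then (1:ℝ) else 0) * f G)
      = f (gInftyZ U V) := by
    rw [Finset.sum_eq_single (gInftyZ U V)]
    · simp
    · intro b _ hb; simp [hb]
    · intro h; exact absurd (Finset.mem_univ _) h
  rwa [this] at h
end

section
/- Let μ be the standard Gumbel probability measure on ℝ, i.e., the measure with density x ↦ exp(−x − exp(−x)) with respect to Lebesgue measure. Then for every q ∈ (0, 1), the product measure μ × μ assigns probability exactly q to the event {(x, y) ∈ ℝ × ℝ : x + log q > y + log(1 − q)}. -/
open MeasureTheory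

open Real Filter Topology

noncomputable def gumbelF (a x : ℝ) : ℝ := Real.exp (-x - a * Real.exp (-x))

lemma gumbel_hasDerivAt (a x : ℝ) :
    HasDerivAt (fun x => Real.exp (-(a * Real.exp (-x)))) (a * gumbelF a x) x := by
  have h1 : HasDerivAt (fun x : ℝ => -(a * Real.exp (-x))) (a * Real.exp (-x)) x := by
    have h0 : HasDerivAt (fun x : ℝ => Real.exp (-x)) (Real.exp (-x) * (-1)) x :=
      (Real.hasDerivAt_exp (-x)).comp x (hasDerivAt_neg x)
    have := (h0.const_mul a).neg
    exact this.congr_deriv (by ring)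
  have := h1.exp
  convert this using 1
  unfold gumbelF
  rw [show -x - a * Real.exp (-x) = -x + -(a * Real.exp (-x)) by ring, Real.exp_add]
  ring

lemma gumbelF_cont (a : ℝ) : Continuous (fun x => a * gumbelF a x) := by
  unfold gumbelF; fun_prop

lemma gumbel_tendsto_atBot (a : ℝ) (ha : 0 < a) :
    Tendsto (fun x => Real.exp (-(a * Real.exp (-x)))) atBot (𝓝 0) := by
  have h1 : Tendsto (fun x : ℝ => Real.exp (-x)) atBot atTop :=
    Real.tendsto_exp_atTop.comp tendsto_neg_atBot_atTop
  have h2 : Tendsto (fun x : ℝ => a * Real.exp (-x)) atBot atTop :=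
    h1.const_mul_atTop ha
  exact Real.tendsto_exp_atBot.comp (tendsto_neg_atTop_atBot.comp h2)

lemma gumbel_tendsto_atTop (a : ℝ) :
    Tendsto (fun x => Real.exp (-(a * Real.exp (-x)))) atTop (𝓝 1) := by
  have h1 : Tendsto (fun x : ℝ => -(a * Real.exp (-x))) atTop (𝓝 0) := by
    have := (Real.tendsto_exp_neg_atTop_nhds_zero.const_mul a).neg
    simpa using this
  have := (Real.continuous_exp.tendsto 0).comp h1
  simpa [Function.comp_def] using this

lemma gumbel_intervalIntegral (a : ℝ) (ha : 0 < a) (s t : ℝ) :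
    ∫ x in s..t, a * gumbelF a x
      = Real.exp (-(a * Real.exp (-t))) - Real.exp (-(a * Real.exp (-s))) :=
  intervalIntegral.integral_eq_sub_of_hasDerivAt
    (fun x _ => gumbel_hasDerivAt a x) ((gumbelF_cont a).intervalIntegrable s t)

lemma gumbel_integrable (a : ℝ) (ha : 0 < a) :
    Integrable (fun x => a * gumbelF a x) := by
  apply MeasureTheory.integrable_of_intervalIntegral_norm_bounded
    (a := fun i : ℕ => -(i : ℝ)) (b := fun i : ℕ => (i : ℝ)) (l := atTop) 1
  · exact fun i => (gumbelF_cont a).integrableOn_Ioc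
  · exact tendsto_neg_atTop_atBot.comp tendsto_natCast_atTop_atTop
  · exact tendsto_natCast_atTop_atTop
  · filter_upwards with i
    have hcong : (∫ x in (-(i:ℝ))..(i:ℝ), ‖a * gumbelF a x‖)
        = ∫ x in (-(i:ℝ))..(i:ℝ), a * gumbelF a x := by
      apply intervalIntegral.integral_congr
      intro x _
      exact norm_of_nonneg (mul_nonneg ha.le (Real.exp_nonneg _))
    rw [hcong, gumbel_intervalIntegral a ha]
    have h1 : Real.exp (-(a * Real.exp (-(i:ℝ)))) ≤ 1 := by
      apply Real.exp_le_one_iff.mpr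
      simpa using mul_nonneg ha.le (Real.exp_nonneg _)
    have h2 : 0 ≤ Real.exp (-(a * Real.exp (-(-(i:ℝ))))) := Real.exp_nonneg _
    linarith

lemma gumbel_integral (a : ℝ) (ha : 0 < a) :
    ∫ x, a * gumbelF a x = 1 := by
  have := MeasureTheory.integral_of_hasDerivAt_of_tendsto
    (fun x => gumbel_hasDerivAt a x) (gumbel_integrable a ha)
    (gumbel_tendsto_atBot a ha) (gumbel_tendsto_atTop a)
  simpa using this

lemma gumbel_Iio (t : ℝ) :
    (volume.withDensity fun x => ENNReal.ofReal (Real.exp (-x - Real.exp (-x))))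
      (Set.Iio t) = ENNReal.ofReal (Real.exp (-(Real.exp (-t)))) := by
  rw [withDensity_apply _ measurableSet_Iio]
  have hint : IntegrableOn (fun x => Real.exp (-x - Real.exp (-x))) (Set.Iio t) := by
    have := (gumbel_integrable 1 one_pos).integrableOn (s := Set.Iio t)
    simpa [gumbelF] using this
  rw [← MeasureTheory.ofReal_integral_eq_lintegral_ofReal]
  · congr 1
    have hIic : ∫ x in Set.Iic t, gumbelF 1 x
        = Real.exp (-(1 * Real.exp (-t))) - 0 := by
      apply MeasureTheory.integral_Iic_of_hasDerivAt_of_tendsto'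
        (f' := fun x => gumbelF 1 x)
      · intro x _
        simpa using gumbel_hasDerivAt 1 x
      · have := (gumbel_integrable 1 one_pos).integrableOn (s := Set.Iic t)
        apply this.congr_fun _ measurableSet_Iic
        intro x _; simp
      · exact gumbel_tendsto_atBot 1 one_pos
    have hIio : ∫ x in Set.Iio t, gumbelF 1 x = ∫ x in Set.Iic t, gumbelF 1 x := by
      rw [MeasureTheory.integral_Iic_eq_integral_Iio]
    calc ∫ x in Set.Iio t, Real.exp (-x - Real.exp (-x))
        = ∫ x in Set.Iio t, gumbelF 1 x := by unfold gumbelF; simp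
      _ = Real.exp (-(Real.exp (-t))) := by rw [hIio, hIic]; simp
  · exact hint
  · filter_upwards with x using Real.exp_nonneg _

/-- The Gumbel-max trick, equation (B.1) of DiBS: for independent standard Gumbel
random variables `x, y`, the event `x + log q > y + log (1 − q)` has probability `q`,
for every `q ∈ (0, 1)`. -/
theorem gumbel_max_trick
    (μ : Measure ℝ)
    (hμ : μ = volume.withDensity fun x => ENNReal.ofReal (Real.exp (-x - Real.exp (-x))))
    (q : ℝ) (hq : q ∈ Set.Ioo (0 : ℝ) 1) :
    (μ.prod μ) {p : ℝ × ℝ | p.2 + Real.log (1 - q) < p.1 + Real.log q}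
      = ENNReal.ofReal q := by
  obtain ⟨hq0, hq1⟩ := hq
  have h1q : 0 < 1 - q := by linarith
  have hq' : (0 : ℝ) < 1 / q := by positivity
  subst hμ
  set c : ℝ := Real.log q - Real.log (1 - q) with hc
  have hS : MeasurableSet {p : ℝ × ℝ | p.2 + Real.log (1 - q) < p.1 + Real.log q} :=
    measurableSet_lt (by fun_prop) (by fun_prop)
  rw [Measure.prod_apply hS]
  have hpre : ∀ x : ℝ,
      (Prod.mk x ⁻¹' {p : ℝ × ℝ | p.2 + Real.log (1 - q) < p.1 + Real.log q})
        = Set.Iio (x + c) := by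
    intro x
    ext y
    simp only [Set.mem_preimage, Set.mem_setOf_eq, Set.mem_Iio, hc]
    constructor <;> intro h <;> linarith
  have hstep1 : (∫⁻ x, (volume.withDensity fun x =>
        ENNReal.ofReal (Real.exp (-x - Real.exp (-x))))
        (Prod.mk x ⁻¹' {p : ℝ × ℝ | p.2 + Real.log (1 - q) < p.1 + Real.log q})
        ∂(volume.withDensity fun x => ENNReal.ofReal (Real.exp (-x - Real.exp (-x)))))
      = ∫⁻ x, ENNReal.ofReal (Real.exp (-(Real.exp (-(x + c)))))
        ∂(volume.withDensity fun x => ENNReal.ofReal (Real.exp (-x - Real.exp (-x)))) := by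
    apply lintegral_congr
    intro x
    rw [hpre x, gumbel_Iio]
  rw [hstep1]
  rw [lintegral_withDensity_eq_lintegral_mul volume (by fun_prop) (by fun_prop)]
  have hec : Real.exp (-c) = (1 - q) / q := by
    rw [hc, neg_sub, Real.exp_sub, Real.exp_log h1q, Real.exp_log hq0]
  have hkey : ∀ x : ℝ,
      Real.exp (-x - Real.exp (-x)) * Real.exp (-(Real.exp (-(x + c))))
        = gumbelF (1 / q) x := by
    intro x
    unfold gumbelF
    rw [← Real.exp_add]
    congr 1
    have h1 : Real.exp (-(x + c)) = Real.exp (-x) * Real.exp (-c) := by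
      rw [← Real.exp_add]; ring_nf
    rw [h1, hec]
    field_simp
    ring
  have hstep2 : (∫⁻ x, ((fun x => ENNReal.ofReal (Real.exp (-x - Real.exp (-x)))) *
        fun x => ENNReal.ofReal (Real.exp (-(Real.exp (-(x + c)))))) x ∂volume)
      = ∫⁻ x, ENNReal.ofReal (gumbelF (1 / q) x) ∂volume := by
    apply lintegral_congr
    intro x
    simp only [Pi.mul_apply]
    rw [← ENNReal.ofReal_mul (Real.exp_nonneg _), hkey x]
  rw [hstep2]
  have hi : Integrable (fun x => gumbelF (1 / q) x) := by
    have h := (gumbel_integrable (1 / q) hq').const_mul q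
    refine h.congr (Filter.Eventually.of_forall fun x => ?_)
    field_simp
  rw [← MeasureTheory.ofReal_integral_eq_lintegral_ofReal hi
    (Filter.Eventually.of_forall fun x => Real.exp_nonneg _)]
  congr 1
  have h := gumbel_integral (1 / q) hq'
  rw [integral_const_mul] at h
  field_simp at h
  linarith
end
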